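/- The restriction of the cocycle c(A,B) = ∫ res([log D, A]∘B) to the subalgebra of vector fields {u(z)D} equals the Gelfand–Fuchs cocycle: c(u(z)D, v(z)D) = (1/6)·Res_{z=0}(u''(z)·v'(z)). -/

import Mathlib

noncomputable section

/-- Generalized binomial coefficient `binom(m, l)` for integer `m`. -/
def qbinom (m : ℤ) (l : ℕ) : ℚ :=
  (∏ i ∈ Finset.range l, ((m : ℚ) - (i : ℚ))) / (Nat.factorial l : ℚ)

/-- Product of pseudodifferential symbols via `Dᵐ ∘ u = Σ binom(m,l) u^{(l)} D^{m-l}`. -/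
def pdMul {R : Type*} [CommRing R] [Algebra ℚ R] (d : R → R) (A B : ℤ → R) : ℤ → R :=
  fun m => ∑ᶠ p : ℤ × ℕ, qbinom p.1 p.2 • (A p.1 * d^[p.2] (B (m - p.1 + (p.2 : ℤ))))

/-- The coefficients of `[log D, A]`. -/
def adLog {R : Type*} [CommRing R] [Algebra ℚ R] (d : R → R) (A : ℤ → R) : ℤ → R :=
  fun m => ∑ᶠ l : ℕ, (if l = 0 then (0 : ℚ) else ((-1) ^ (l + 1) / l)) • d^[l] (A (m + l))

/-- Formal derivative `d/dz` on Laurent polynomials `ℂ[z,z⁻¹]`. -/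
def lder (f : LaurentPolynomial ℂ) : LaurentPolynomial ℂ :=
  Finsupp.sum (show ℤ →₀ ℂ from AddMonoidAlgebra.coeff f) fun n a =>
    show LaurentPolynomial ℂ from AddMonoidAlgebra.ofCoeff (Finsupp.single (n - 1) ((n : ℂ) * a))

/-- Residue at `z = 0`: the coefficient of `z⁻¹`. -/
def lres (f : LaurentPolynomial ℂ) : ℂ := (show ℤ →₀ ℂ from AddMonoidAlgebra.coeff f) (-1)

/-- The 2-cocycle `c(A,B) = ∫ res ([log D, A] ∘ B)`. -/
def coc (A B : ℤ → LaurentPolynomial ℂ) : ℂ := lres (pdMul lder (adLog lder A) B (-1))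

/-- The vector field `u(z) D` viewed as a symbol. -/
def vf (u : LaurentPolynomial ℂ) : ℤ → LaurentPolynomial ℂ :=
  fun k => if k = 1 then u else 0
lemma lder_zero : lder 0 = 0 := by simp [lder]

lemma lder_iter_zero (l : ℕ) : lder^[l] 0 = 0 := Function.iterate_fixed lder_zero l

lemma lder_single (n : ℤ) (a : ℂ) :
    lder (AddMonoidAlgebra.single n a) = AddMonoidAlgebra.single (n-1) ((n:ℂ) * a) := by
  unfold lder
  rw [AddMonoidAlgebra.coeff_single, Finsupp.sum_single_index]
  · rfl
  · show AddMonoidAlgebra.ofCoeff _ = 0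
    simp

lemma lder_add (f g : LaurentPolynomial ℂ) : lder (f + g) = lder f + lder g := by
  unfold lder
  rw [AddMonoidAlgebra.coeff_add, Finsupp.sum_add_index] <;> intros <;>
    simp [mul_add, Finsupp.single_add, AddMonoidAlgebra.ofCoeff_add]

lemma lp_single_mul (n m : ℤ) (a b : ℂ) :
    (AddMonoidAlgebra.single n a : AddMonoidAlgebra ℂ ℤ) * AddMonoidAlgebra.single m b
      = AddMonoidAlgebra.single (n + m) (a * b) :=
  AddMonoidAlgebra.single_mul_single ..

lemma lder_mul (f g : LaurentPolynomial ℂ) : lder (f * g) = lder f * g + f * lder g := by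
  induction f using AddMonoidAlgebra.induction_linear with
  | zero => simp [lder_zero]
  | add a b ha hb => rw [add_mul, lder_add, ha, hb, lder_add]; ring
  | single n a =>
    induction g using AddMonoidAlgebra.induction_linear with
    | zero => simp [lder_zero]
    | add c d hc hd => rw [mul_add, lder_add, hc, hd, lder_add]; ring
    | single m b =>
      rw [lp_single_mul, lder_single, lder_single, lder_single, lp_single_mul, lp_single_mul,
        show n - 1 + m = n + m - 1 by ring, show n + (m - 1) = n + m - 1 by ring,
        ← AddMonoidAlgebra.single_add]
      congr 1
      push_cast
      ring

lemma lres_add (f g : LaurentPolynomial ℂ) : lres (f + g) = lres f + lres g :=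
  by rw [lres, lres, lres, AddMonoidAlgebra.coeff_add, Finsupp.add_apply]

lemma lres_smul (q : ℚ) (f : LaurentPolynomial ℂ) : lres (q • f) = (q : ℂ) * lres f := by
  rw [lres, lres, AddMonoidAlgebra.coeff_smul, Finsupp.smul_apply, Rat.smul_def]

lemma lres_lder (f : LaurentPolynomial ℂ) : lres (lder f) = 0 := by
  unfold lres lder
  rw [AddMonoidAlgebra.coeff_finsuppSum, Finsupp.sum_apply]
  apply Finset.sum_eq_zero
  intro n _
  dsimp only
  rw [AddMonoidAlgebra.coeff_ofCoeff, Finsupp.single_apply]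
  split_ifs with h
  · have hn : n = 0 := by omega
    simp [hn]
  · rfl

lemma adLog_vf_pos (u : LaurentPolynomial ℂ) (m : ℤ) (hm : 1 ≤ m) :
    adLog lder (vf u) m = 0 := by
  unfold adLog
  rw [show (0 : LaurentPolynomial ℂ) = ∑ᶠ _ : ℕ, (0 : LaurentPolynomial ℂ) by
    rw [finsum_zero]]
  apply finsum_congr
  intro l
  rcases Nat.eq_zero_or_pos l with h | h
  · simp [h]
  · have hne : m + (l : ℤ) ≠ 1 := by omega
    simp [vf, hne, lder_iter_zero]

lemma adLog_vf_neg2 (u : LaurentPolynomial ℂ) :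
    adLog lder (vf u) (-2) = ((1:ℚ)/3) • lder (lder (lder u)) := by
  unfold adLog
  rw [finsum_eq_single _ 3]
  · have h1 : (-2 + ((3:ℕ) : ℤ)) = 1 := by norm_num
    rw [h1]
    simp [vf]
    norm_num [Function.iterate_succ_apply', show ((-1:ℚ))^(3+1) = 1 by norm_num]
  · intro l hl
    rcases Nat.eq_zero_or_pos l with h | h
    · simp [h]
    · have hne : (-2 : ℤ) + (l : ℤ) ≠ 1 := by
        intro hc
        exact hl (by omega)
      simp [vf, hne, lder_iter_zero]

lemma adLog_vf_neg1 (u : LaurentPolynomial ℂ) :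
    adLog lder (vf u) (-1) = (-(1:ℚ)/2) • lder (lder u) := by
  unfold adLog
  rw [finsum_eq_single _ 2]
  · have h1 : (-1 + ((2:ℕ) : ℤ)) = 1 := by norm_num
    rw [h1]
    simp [vf]
    norm_num [Function.iterate_succ_apply']
  · intro l hl
    rcases Nat.eq_zero_or_pos l with h | h
    · simp [h]
    · have hne : (-1 : ℤ) + (l : ℤ) ≠ 1 := by
        intro hc
        exact hl (by omega)
      simp [vf, hne, lder_iter_zero]

lemma qbinom_neg2_0 : qbinom (-2) 0 = 1 := by norm_num [qbinom]

lemma qbinom_neg1_1 : qbinom (-1) 1 = -1 := by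
  norm_num [qbinom, Finset.prod_range_succ]

lemma qbinom_0_2 : qbinom 0 2 = 0 := by
  norm_num [qbinom, Finset.prod_range_succ]

/-- the restriction of the cocycle `c` to vector fields is the
Gelfand–Fuchs cocycle: `c(uD, vD) = (1/6)·Res_{z=0}(u''·v')`. -/
theorem coc_on_vector_fields (u v : LaurentPolynomial ℂ) :
    coc (vf u) (vf v) = (1/6 : ℂ) * lres (lder (lder u) * lder v) := by
  have key : lres (lder (lder (lder u)) * v) = - lres (lder (lder u) * lder v) := by
    have h0 : lres (lder (lder (lder u) * v)) = 0 := lres_lder _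
    rw [lder_mul, lres_add] at h0
    linear_combination h0
  unfold coc pdMul
  set f : ℤ × ℕ → LaurentPolynomial ℂ := fun p =>
    qbinom p.1 p.2 • (adLog lder (vf u) p.1 *
      lder^[p.2] (vf v (-1 - p.1 + (p.2 : ℤ)))) with hf
  have hsupp : Function.support f ⊆
      (({(-2, 0), (-1, 1), (0, 2)} : Finset (ℤ × ℕ)) : Set (ℤ × ℕ)) := by
    intro p hp
    simp only [Function.mem_support] at hp
    by_contra hmem
    apply hp
    obtain ⟨a, l⟩ := p
    simp only [Finset.coe_insert, Finset.coe_singleton, Set.mem_insert_iff,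
      Set.mem_singleton_iff, Prod.mk.injEq, not_or, not_and] at hmem
    by_cases h1 : (-1 : ℤ) - a + (l : ℤ) = 1
    · have ha : (1 : ℤ) ≤ a := by
        rcases hmem with ⟨h2, h3, h4⟩
        omega
      simp [hf, adLog_vf_pos u a ha]
    · simp [hf, vf, h1, lder_iter_zero]
  rw [finsum_eq_sum_of_support_subset f hsupp]
  rw [show ({(-2, 0), (-1, 1), (0, 2)} : Finset (ℤ × ℕ))
      = insert (-2, 0) (insert (-1, 1) {(0, 2)}) from rfl]
  rw [Finset.sum_insert (by decide), Finset.sum_insert (by decide),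
    Finset.sum_singleton]
  have e1 : f (-2, 0) = ((1:ℚ)/3) • (lder (lder (lder u)) * v) := by
    simp only [hf]
    norm_num [qbinom_neg2_0, adLog_vf_neg2, vf, smul_mul_assoc]
  have e2 : f (-1, 1) = ((1:ℚ)/2) • (lder (lder u) * lder v) := by
    simp only [hf]
    norm_num [qbinom_neg1_1, adLog_vf_neg1, vf, smul_mul_assoc, smul_smul]
  have e3 : f (0, 2) = 0 := by
    simp [hf, qbinom_0_2]
  rw [e1, e2, e3, add_zero, lres_add, lres_smul, lres_smul, key]
  push_cast
  ring
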